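/- arXiv:1507.08759 — 2 statements merged into one kernel-verified Lean document; each statement's English description precedes it below -/
import Mathlib

section
/- Let $u \in \mathcal{E}(\mathcal{U}^o_\beta)$ be a compact Lyapunov function on $E$ (i.e., $[u \leq n]$ is relatively compact for all $n \in \mathbb{N}^*$). Then the function $l_{1+u}: \widehat{E} \to [0,\infty]$, $l_{1+u}(\mu) = \mu(E) + \int u\,d\mu$, has relatively compact sublevel sets in $\widehat{E}$: for each $n$, $[l_{1+u} \leq n] \subseteq E^{(0)} \cup K_n \cup K_n^{(2)} \cup \cdots \cup K_n^{(n)}$ where $K_n$ is a compact set containing $[u \leq n]$, and the latter union is compact in $\widehat{E}$. -/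
noncomputable section

/-- `List.ofFn : (Fin m → E) → List E` is continuous. -/
lemma continuous_ofFn {E : Type*} [TopologicalSpace E] :
    ∀ m : ℕ, Continuous fun f : Fin m → E => List.ofFn f := by
  intro m
  induction m with
  | zero => simpa using continuous_const
  | succ m ih =>
      have : (fun f : Fin (m+1) → E => List.ofFn f)
          = fun f => f 0 :: List.ofFn (fun i : Fin m => f i.succ) := by
        funext f; simp [List.ofFn_succ]
      rw [this]
      exact List.continuous_cons.comp ((continuous_apply 0).prodMk
        (ih.comp (continuous_pi fun i => continuous_apply i.succ)))

/-- The set of lists of length at most `n` with entries in a compact set is compact. -/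
lemma lists_compact {E : Type*} [TopologicalSpace E] {K : Set E} (hK : IsCompact K) (n : ℕ) :
    IsCompact {l : List E | l.length ≤ n ∧ ∀ x ∈ l, x ∈ K} := by
  have heq : {l : List E | l.length ≤ n ∧ ∀ x ∈ l, x ∈ K}
      = ⋃ m ∈ Finset.range (n+1),
          (fun f : Fin m → E => List.ofFn f) '' (Set.univ.pi fun _ => K) := by
    ext l
    simp only [Set.mem_setOf_eq, Set.mem_iUnion, Finset.mem_range, Set.mem_image,
      Set.mem_pi, Set.mem_univ, forall_true_left]
    constructor
    · rintro ⟨hlen, hmem⟩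
      exact ⟨l.length, Nat.lt_succ_of_le hlen, l.get,
        fun i => hmem _ (l.get_mem _), List.ofFn_get l⟩
    · rintro ⟨m, hm, f, hf, rfl⟩
      refine ⟨by simpa using Nat.lt_succ_iff.mp hm, ?_⟩
      intro x hx
      rw [List.mem_ofFn] at hx
      obtain ⟨i, rfl⟩ := hx
      exact hf i
  rw [heq]
  exact (Finset.range (n+1)).isCompact_biUnion fun m _ =>
    (isCompact_univ_pi fun _ => hK).image (continuous_ofFn m)


/-- The space of finite configurations `Ê = ⋃_m E^{(m)}` is modelled by finite multisets,
topologized as the quotient of the space of finite sequences; this is the disjoint union of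
the symmetric powers `E^{(m)}` with their quotient topologies. -/
instance confTop (E : Type*) [TopologicalSpace E] : TopologicalSpace (Multiset E) :=
  inferInstanceAs (TopologicalSpace (Quotient (List.isSetoid E)))

/-- `l_f(μ) = ∫ f dμ` for a finite configuration `μ`. -/
def lf {E : Type*} (f : E → ℝ) (μ : Multiset E) : ℝ := (μ.map f).sum

/-- if `u ≥ 0` is Borel with relatively compact sublevel sets (a compact
Lyapunov function), and `K n` is a compact set containing `[u ≤ n]`, then the sublevel set
`[l_{1+u} ≤ n]` in the configuration space is contained in
`E^{(0)} ∪ K_n ∪ K_n^{(2)} ∪ ⋯ ∪ K_n^{(n)}` — the set of configurations with at most `n`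
points, all lying in `K n` — and the latter set is compact; hence `l_{1+u}` has relatively
compact sublevel sets. -/
theorem stmt13 {E : Type*} [TopologicalSpace E] [MeasurableSpace E] [BorelSpace E]
    (u : E → ℝ) (hum : Measurable u) (hu0 : ∀ x, 0 ≤ u x)
    (hrel : ∀ n : ℕ, 0 < n → IsCompact (closure {x : E | u x ≤ (n : ℝ)}))
    (K : ℕ → Set E) (hKcpt : ∀ n, IsCompact (K n)) (hK : ∀ n : ℕ, {x : E | u x ≤ (n : ℝ)} ⊆ K n) :
    ∀ n : ℕ, 0 < n →
      {μ : Multiset E | lf (fun x => 1 + u x) μ ≤ (n : ℝ)} ⊆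
          {μ : Multiset E | Multiset.card μ ≤ n ∧ ∀ x ∈ μ, x ∈ K n} ∧
        IsCompact {μ : Multiset E | Multiset.card μ ≤ n ∧ ∀ x ∈ μ, x ∈ K n} := by
  intro n hn
  constructor
  · intro μ hμ
    simp only [Set.mem_setOf_eq] at hμ ⊢
    have hterm : ∀ y ∈ μ.map (fun x => 1 + u x), (1:ℝ) ≤ y := by
      intro y hy
      obtain ⟨x, _, rfl⟩ := Multiset.mem_map.mp hy
      linarith [hu0 x]
    constructor
    · have h1 : (Multiset.card μ : ℝ) ≤ lf (fun x => 1 + u x) μ := by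
        have := Multiset.card_nsmul_le_sum hterm
        simpa [lf, nsmul_eq_mul] using this
      exact_mod_cast h1.trans hμ
    · intro x hx
      apply hK n
      have h2 : (1 + u x : ℝ) ≤ lf (fun x => 1 + u x) μ := by
        refine Multiset.single_le_sum (fun y hy => le_trans zero_le_one (hterm y hy)) _ ?_
        exact Multiset.mem_map_of_mem _ hx
      simp only [Set.mem_setOf_eq]
      linarith [h2.trans hμ]
  · have heq : {μ : Multiset E | Multiset.card μ ≤ n ∧ ∀ x ∈ μ, x ∈ K n}
        = (fun l : List E => (l : Multiset E)) '' {l | l.length ≤ n ∧ ∀ x ∈ l, x ∈ K n} := by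
      ext μ
      constructor
      · rintro ⟨hc, hm⟩
        induction μ using Quotient.inductionOn with
        | h l => exact ⟨l, ⟨by simpa using hc, fun x hx => hm x (by simpa using hx)⟩, rfl⟩
      · rintro ⟨l, ⟨hl, hm⟩, rfl⟩
        exact ⟨by simpa using hl, fun x hx => hm x (by simpa using hx)⟩
    rw [heq]
    exact (lists_compact (hKcpt n) n).image continuous_quot_mk

end
end

section
/- Let $\mathcal{U} = (U_\alpha)_{\alpha>0}$ be a sub-Markovian resolvent on a Lusin space $E$ satisfying that all points are non-branch points w.r.t. $\mathcal{U}_\beta$. Let $u_0 = U_\beta f_0$ for a bounded strictly positive measurable $f_0$, and suppose there exists a constant $k > 0$ with $k \leq u_0$. If there exists a $\mathcal{U}_\beta$-excessive function $v$, finite $\lambda$-a.e. for a finite measure $\lambda$, such that $[v \leq \alpha]$ is relatively compact for all $\alpha > 0$ (a compact Lyapunov function), then the capacity $c_\lambda(M) := \inf\{\lambda(R^G_\beta u_0): G \text{ open}, M \subseteq G\}$ is tight: there is an increasing sequence of compacts $(K_n)$ with $\inf_n c_\lambda(E \setminus K_n) = 0$. -/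
open MeasureTheory
open scoped ENNReal

noncomputable section

/-- The cone of `𝒰_β`-excessive functions (`ℝ≥0∞`-valued): measurable `u` with
`α U_{β+α} u ≤ u` for all `α > 0` and `sup_α α U_{β+α} u = u` pointwise. -/
def exc {E : Type*} [MeasurableSpace E]
    (U : ℝ → (E → ℝ≥0∞) → (E → ℝ≥0∞)) (β : ℝ) : Set (E → ℝ≥0∞) :=
  {u | Measurable u ∧
    (∀ α : ℝ, 0 < α → ∀ x, ENNReal.ofReal α * U (β + α) u x ≤ u x) ∧
    ∀ x, (⨆ α ∈ Set.Ioi (0:ℝ), ENNReal.ofReal α * U (β + α) u x) = u x}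

/-- The reduced function `R^M_β u = inf { w excessive : w ≥ u on M }`. -/
def reduced {E : Type*} [MeasurableSpace E]
    (U : ℝ → (E → ℝ≥0∞) → (E → ℝ≥0∞)) (β : ℝ) (M : Set E) (u : E → ℝ≥0∞) : E → ℝ≥0∞ :=
  fun x => ⨅ w ∈ {w ∈ exc U β | ∀ y ∈ M, u y ≤ w y}, w x

/-- The capacity `c_λ(M) = inf { λ(R^G_β u₀) : G open, M ⊆ G }`. -/
def cap {E : Type*} [TopologicalSpace E] [MeasurableSpace E]
    (U : ℝ → (E → ℝ≥0∞) → (E → ℝ≥0∞)) (β : ℝ) (u₀ : E → ℝ≥0∞)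
    (lam : Measure E) (M : Set E) : ℝ≥0∞ :=
  ⨅ G ∈ {G : Set E | IsOpen G ∧ M ⊆ G}, ∫⁻ x, reduced U β G u₀ x ∂lam

/-- existence of a compact Lyapunov function implies tightness of the
capacity `c_λ`. -/
theorem stmt18 {E : Type*} [TopologicalSpace E] [MeasurableSpace E] [BorelSpace E]
    (U : ℝ → (E → ℝ≥0∞) → (E → ℝ≥0∞)) (β : ℝ) (hβ : 0 < β)
    (hmono : ∀ α : ℝ, 0 < α → ∀ f g : E → ℝ≥0∞, f ≤ g → U α f ≤ U α g)
    (hadd : ∀ α : ℝ, 0 < α → ∀ f g : E → ℝ≥0∞, U α (f + g) = U α f + U α g)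
    (hmeas : ∀ α : ℝ, 0 < α → ∀ f : E → ℝ≥0∞, Measurable f → Measurable (U α f))
    (hsub : ∀ α : ℝ, 0 < α → ∀ x, ENNReal.ofReal α * U α (fun _ => 1) x ≤ 1)
    (hres : ∀ α γ : ℝ, 0 < α → α < γ → ∀ (f : E → ℝ≥0∞) (x : E),
      U α f x = U γ f x + ENNReal.ofReal (γ - α) * U α (U γ f) x)
    -- all points of `E` are non-branch points with respect to `𝒰_β`:
    (hone : (fun _ : E => (1 : ℝ≥0∞)) ∈ exc U β)
    (hnonbranch : ∀ u ∈ exc U β, ∀ v ∈ exc U β, ∀ x : E,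
      min (u x) (v x) =
        ⨆ α ∈ Set.Ioi (0:ℝ), ENNReal.ofReal α * U (β + α) (fun y => min (u y) (v y)) x)
    -- `u₀ = U_β f₀` with `f₀` bounded, strictly positive, measurable, and `k ≤ u₀`:
    (f₀ : E → ℝ≥0∞) (hf₀m : Measurable f₀) (hf₀b : ∃ C : ℝ≥0∞, C < ⊤ ∧ ∀ x, f₀ x ≤ C)
    (hf₀pos : ∀ x, 0 < f₀ x)
    (k : ℝ≥0∞) (hk : 0 < k) (hku₀ : ∀ x, k ≤ U β f₀ x)
    -- a finite measure `λ` and a compact Lyapunov function `v`: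
    (lam : Measure E) [IsFiniteMeasure lam]
    (v : E → ℝ≥0∞) (hv : v ∈ exc U β) (hvfin : ∀ᵐ x ∂lam, v x < ⊤)
    (hvcpt : ∀ α : ℝ≥0∞, 0 < α → α < ⊤ → IsCompact (closure {x : E | v x ≤ α})) :
    ∃ K : ℕ → Set E, Monotone K ∧ (∀ n, IsCompact (K n)) ∧
      (⨅ n : ℕ, cap U β (U β f₀) lam (K n)ᶜ) = 0 := by
  classical
  -- `U γ` commutes with multiplication by positive naturals
  have hUnat : ∀ γ : ℝ, 0 < γ → ∀ f : E → ℝ≥0∞, ∀ m : ℕ,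
      U γ (fun x => ((m:ℝ≥0∞)+1) * f x) = fun x => ((m:ℝ≥0∞)+1) * U γ f x := by
    intro γ hγ f m
    induction m with
    | zero => simp
    | succ m ih =>
      have h1 : (fun x => (((m+1:ℕ):ℝ≥0∞)+1) * f x) = f + fun x => ((m:ℝ≥0∞)+1) * f x := by
        funext x; show _ = f x + _; push_cast; ring
      rw [h1, hadd γ hγ, ih]
      funext x; show U γ f x + ((m:ℝ≥0∞)+1) * U γ f x = _; push_cast; ring
  -- `U γ` commutes with division by positive naturals
  have hm0 : ∀ m : ℕ, ((m:ℝ≥0∞)+1) ≠ 0 := fun m => (lt_of_lt_of_le one_pos le_add_self).ne'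
  have hmt : ∀ m : ℕ, ((m:ℝ≥0∞)+1) ≠ ⊤ :=
    fun m => ENNReal.add_ne_top.mpr ⟨ENNReal.natCast_ne_top m, ENNReal.one_ne_top⟩
  have hpull : ∀ (a : ℝ≥0∞) (g : ℝ → ℝ≥0∞),
      (⨆ α ∈ Set.Ioi (0:ℝ), a * g α) = a * ⨆ α ∈ Set.Ioi (0:ℝ), g α := by
    intro a g
    rw [ENNReal.mul_iSup]
    exact iSup_congr fun α => by rw [ENNReal.mul_iSup]
  have hUdiv : ∀ γ : ℝ, 0 < γ → ∀ f : E → ℝ≥0∞, ∀ m : ℕ, ∀ x : E,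
      U γ (fun y => f y / ((m:ℝ≥0∞)+1)) x = U γ f x / ((m:ℝ≥0∞)+1) := by
    intro γ hγ f m x
    have h1 : (fun y => ((m:ℝ≥0∞)+1) * (f y / ((m:ℝ≥0∞)+1))) = f := by
      funext y; exact ENNReal.mul_div_cancel (hm0 m) (hmt m)
    have h2 := hUnat γ hγ (fun y => f y / ((m:ℝ≥0∞)+1)) m
    rw [h1] at h2
    have h3 : U γ f x = ((m:ℝ≥0∞)+1) * U γ (fun y => f y / ((m:ℝ≥0∞)+1)) x := by
      conv_lhs => rw [h2]
    exact (ENNReal.eq_div_iff (hm0 m) (hmt m)).mpr h3.symm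
  -- min of two excessive functions is excessive
  have hminexc : ∀ u' ∈ exc U β, ∀ v' ∈ exc U β, (fun x => min (u' x) (v' x)) ∈ exc U β := by
    intro u' hu' v' hv'
    refine ⟨hu'.1.min hv'.1, ?_, fun x => (hnonbranch u' hu' v' hv' x).symm⟩
    intro α hα x
    refine le_min ?_ ?_
    · calc ENNReal.ofReal α * U (β+α) (fun y => min (u' y) (v' y)) x
          ≤ ENNReal.ofReal α * U (β+α) u' x := by
            gcongr
            exact hmono (β+α) (by linarith) _ _ (fun y => min_le_left _ _) x
      _ ≤ u' x := hu'.2.1 α hα x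
    · calc ENNReal.ofReal α * U (β+α) (fun y => min (u' y) (v' y)) x
          ≤ ENNReal.ofReal α * U (β+α) v' x := by
            gcongr
            exact hmono (β+α) (by linarith) _ _ (fun y => min_le_right _ _) x
      _ ≤ v' x := hv'.2.1 α hα x
  -- constants (m+1 : ℕ) are excessive
  have hconst : ∀ m : ℕ, (fun _ : E => ((m:ℝ≥0∞)+1)) ∈ exc U β := by
    intro m
    have hc : ∀ α : ℝ, 0 < α → U (β+α) (fun _ : E => ((m:ℝ≥0∞)+1)) =
        fun x => ((m:ℝ≥0∞)+1) * U (β+α) (fun _ => (1:ℝ≥0∞)) x := by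
      intro α hα
      have := hUnat (β+α) (by linarith) (fun _ => (1:ℝ≥0∞)) m
      simpa using this
    refine ⟨measurable_const, ?_, ?_⟩
    · intro α hα x
      rw [hc α hα]
      calc ENNReal.ofReal α * (((m:ℝ≥0∞)+1) * U (β+α) (fun _ => (1:ℝ≥0∞)) x)
          = ((m:ℝ≥0∞)+1) * (ENNReal.ofReal α * U (β+α) (fun _ => (1:ℝ≥0∞)) x) := by ring
        _ ≤ ((m:ℝ≥0∞)+1) * 1 := by gcongr; exact hone.2.1 α hα x
        _ = (m:ℝ≥0∞)+1 := mul_one _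
    · intro x
      have h2 : ∀ α : ℝ, α ∈ Set.Ioi (0:ℝ) →
          ENNReal.ofReal α * U (β+α) (fun _ : E => ((m:ℝ≥0∞)+1)) x
          = ((m:ℝ≥0∞)+1) * (ENNReal.ofReal α * U (β+α) (fun _ => (1:ℝ≥0∞)) x) := by
        intro α hα; rw [hc α hα]; ring
      rw [iSup_congr fun α => iSup_congr fun hα => h2 α hα, hpull, hone.2.2 x, mul_one]
  -- `v / (m+1)` is excessive
  have hdivexc : ∀ m : ℕ, (fun x => v x / ((m:ℝ≥0∞)+1)) ∈ exc U β := by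
    intro m
    refine ⟨hv.1.div_const _, ?_, ?_⟩
    · intro α hα x
      rw [hUdiv (β+α) (by linarith) v m x]
      calc ENNReal.ofReal α * (U (β+α) v x / ((m:ℝ≥0∞)+1))
          = (ENNReal.ofReal α * U (β+α) v x) / ((m:ℝ≥0∞)+1) := by
            rw [mul_div_assoc]
        _ ≤ v x / ((m:ℝ≥0∞)+1) := by gcongr; exact hv.2.1 α hα x
    · intro x
      have h2 : ∀ α : ℝ, α ∈ Set.Ioi (0:ℝ) →
          ENNReal.ofReal α * U (β+α) (fun y => v y / ((m:ℝ≥0∞)+1)) x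
          = ((m:ℝ≥0∞)+1)⁻¹ * (ENNReal.ofReal α * U (β+α) v x) := by
        intro α hα
        rw [hUdiv (β+α) (by linarith [Set.mem_Ioi.mp hα]) v m x, div_eq_mul_inv]
        ring
      rw [iSup_congr fun α => iSup_congr fun hα => h2 α hα, hpull, hv.2.2 x,
        mul_comm, ← div_eq_mul_inv]
  -- a uniform bound `u₀ ≤ N+1` for a natural `N`
  obtain ⟨C, hCt, hCle⟩ := hf₀b
  obtain ⟨M, hM⟩ := exists_nat_ge C.toReal
  have hCM : C ≤ ((M:ℝ≥0∞)+1) := by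
    calc C = ENNReal.ofReal C.toReal := (ENNReal.ofReal_toReal hCt.ne).symm
      _ ≤ ENNReal.ofReal M := ENNReal.ofReal_le_ofReal hM
      _ = (M:ℝ≥0∞) := ENNReal.ofReal_natCast M
      _ ≤ (M:ℝ≥0∞)+1 := le_self_add
  have hβ0 : ENNReal.ofReal β ≠ 0 := by
    simp [ENNReal.ofReal_eq_zero, not_le, hβ]
  have hU1 : ∀ x, U β (fun _ => (1:ℝ≥0∞)) x ≤ (ENNReal.ofReal β)⁻¹ := by
    intro x
    rw [ENNReal.le_inv_iff_mul_le]
    calc U β (fun _ => (1:ℝ≥0∞)) x * ENNReal.ofReal β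
        = ENNReal.ofReal β * U β (fun _ => (1:ℝ≥0∞)) x := mul_comm _ _
      _ ≤ 1 := hsub β hβ x
  have hBne : ((M:ℝ≥0∞)+1) * (ENNReal.ofReal β)⁻¹ ≠ ⊤ :=
    ENNReal.mul_ne_top (hmt M) (ENNReal.inv_ne_top.mpr hβ0)
  obtain ⟨N, hN⟩ := exists_nat_ge (((M:ℝ≥0∞)+1) * (ENNReal.ofReal β)⁻¹).toReal
  have hu₀N : ∀ x, U β f₀ x ≤ (N:ℝ≥0∞)+1 := by
    intro x
    have h1 : U β f₀ x ≤ ((M:ℝ≥0∞)+1) * (ENNReal.ofReal β)⁻¹ := by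
      calc U β f₀ x ≤ U β (fun _ => ((M:ℝ≥0∞)+1)) x := by
            refine hmono β hβ _ _ (fun y => le_trans (hCle y) hCM) x
        _ = ((M:ℝ≥0∞)+1) * U β (fun _ => (1:ℝ≥0∞)) x := by
            have := hUnat β hβ (fun _ => (1:ℝ≥0∞)) M
            have h := congrFun this x
            simpa using h
        _ ≤ ((M:ℝ≥0∞)+1) * (ENNReal.ofReal β)⁻¹ := by gcongr; exact hU1 x
    refine h1.trans ?_
    calc ((M:ℝ≥0∞)+1) * (ENNReal.ofReal β)⁻¹
        = ENNReal.ofReal ((((M:ℝ≥0∞)+1) * (ENNReal.ofReal β)⁻¹).toReal) :=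
          (ENNReal.ofReal_toReal hBne).symm
      _ ≤ ENNReal.ofReal N := ENNReal.ofReal_le_ofReal hN
      _ = (N:ℝ≥0∞) := ENNReal.ofReal_natCast N
      _ ≤ (N:ℝ≥0∞)+1 := le_self_add
  -- the compacts and the test excessive functions
  set c : ℕ → ℝ≥0∞ := fun n => ((N:ℝ≥0∞)+1) * ((n:ℝ≥0∞)+1) with hc
  have hcpos : ∀ n, 0 < c n := fun n => ENNReal.mul_pos (hm0 N) (hm0 n)
  have hct : ∀ n, c n < ⊤ := fun n =>
    ENNReal.mul_lt_top (lt_top_iff_ne_top.mpr (hmt N)) (lt_top_iff_ne_top.mpr (hmt n))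
  refine ⟨fun n => closure {x : E | v x ≤ c n}, ?_, ?_, ?_⟩
  · intro a b hab
    refine closure_mono ?_
    intro x hx
    simp only [Set.mem_setOf_eq] at hx ⊢
    refine hx.trans ?_
    simp only [hc]
    gcongr
  · intro n; exact hvcpt (c n) (hcpos n) (hct n)
  · -- tightness
    set w : ℕ → E → ℝ≥0∞ :=
      fun n x => min ((N:ℝ≥0∞)+1) (v x / ((n:ℝ≥0∞)+1)) with hw
    have hwexc : ∀ n, w n ∈ exc U β := fun n => hminexc _ (hconst N) _ (hdivexc n)
    have hwge : ∀ n, ∀ y ∈ (closure {x : E | v x ≤ c n})ᶜ, U β f₀ y ≤ w n y := by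
      intro n y hy
      have hvy : c n < v y := by
        by_contra h
        exact hy (subset_closure (le_of_not_gt h))
      refine le_min (hu₀N y) ?_
      refine (hu₀N y).trans ?_
      rw [ENNReal.le_div_iff_mul_le (Or.inl (hm0 n)) (Or.inl (hmt n))]
      exact hvy.le
    -- capacity bound
    have hcap : ∀ n, cap U β (U β f₀) lam (closure {x : E | v x ≤ c n})ᶜ
        ≤ ∫⁻ x, w n x ∂lam := by
      intro n
      have hG : (closure {x : E | v x ≤ c n})ᶜ ∈
          {G : Set E | IsOpen G ∧ (closure {x : E | v x ≤ c n})ᶜ ⊆ G} :=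
        ⟨isClosed_closure.isOpen_compl, le_refl _⟩
      refine le_trans (iInf₂_le _ hG) ?_
      refine lintegral_mono fun x => ?_
      exact iInf₂_le (w n) ⟨hwexc n, hwge n⟩
    -- the integrals tend to zero
    have hwmeas : ∀ n, Measurable (w n) := fun n =>
      measurable_const.min (hv.1.div_const _)
    have hwanti : Antitone w := by
      intro a b hab x
      refine min_le_min le_rfl ?_
      refine ENNReal.div_le_div_left ?_ _
      gcongr
    have hwfin : ∫⁻ x, w 0 x ∂lam ≠ ⊤ := by
      refine ne_top_of_le_ne_top ?_ (lintegral_mono fun x => min_le_left _ _)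
      rw [lintegral_const]
      exact ENNReal.mul_ne_top (hmt N) (measure_ne_top lam _)
    have hlim : ⨅ n, ∫⁻ x, w n x ∂lam = 0 := by
      rw [← lintegral_iInf hwmeas hwanti hwfin]
      rw [← lintegral_zero]
      refine lintegral_congr_ae ?_
      filter_upwards [hvfin] with x hx
      refine le_antisymm ?_ zero_le
      have h1 : ⨅ n, w n x ≤ ⨅ n : ℕ, v x / ((n:ℝ≥0∞)+1) :=
        iInf_mono fun n => min_le_right _ _
      refine h1.trans ?_
      have hsup : ⨆ n : ℕ, ((n:ℝ≥0∞)+1) = ⊤ := by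
        rw [iSup_eq_top]
        intro b hb
        obtain ⟨n, hn⟩ := ENNReal.exists_nat_gt hb.ne
        exact ⟨n, hn.trans_le le_self_add⟩
      simp_rw [div_eq_mul_inv]
      rw [← ENNReal.mul_iInf (fun hT _ => absurd hT hx.ne), ← ENNReal.inv_iSup, hsup]
      simp
    refine le_antisymm ?_ zero_le
    calc ⨅ n, cap U β (U β f₀) lam (closure {x : E | v x ≤ c n})ᶜ
        ≤ ⨅ n, ∫⁻ x, w n x ∂lam := iInf_mono hcap
      _ = 0 := hlim


end
end
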